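/- (MM majorization inequality used by the SLFPCA algorithm.) For all real numbers v and v₀: -log(π(v)) ≤ -log(π(v₀)) + (1/8)·(v - v₀ - 4·(1 - π(v₀)))², where π(x) = exp(x)/(exp(x)+1) is the logistic function. -/

import Mathlib

open Real Set

/-- The logistic function π(x) = exp(x)/(exp(x)+1). -/
noncomputable def logistic (x : ℝ) : ℝ := Real.exp x / (Real.exp x + 1)

lemma exp_add_one_pos (x : ℝ) : 0 < Real.exp x + 1 := by positivity

lemma logistic_pos (x : ℝ) : 0 < logistic x :=
  div_pos (Real.exp_pos x) (exp_add_one_pos x)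

lemma logistic_lt_one (x : ℝ) : logistic x < 1 := by
  rw [logistic, div_lt_one (exp_add_one_pos x)]; linarith

lemma neg_log_logistic (x : ℝ) :
    -Real.log (logistic x) = Real.log (Real.exp x + 1) - x := by
  rw [logistic, Real.log_div (Real.exp_ne_zero x) (exp_add_one_pos x).ne',
    Real.log_exp]
  ring

lemma hasDerivAt_log_exp_add_one (x : ℝ) :
    HasDerivAt (fun y => Real.log (Real.exp y + 1)) (logistic x) x := by
  have h := ((Real.hasDerivAt_exp x).add_const 1).log (exp_add_one_pos x).ne'
  simpa [logistic] using h

lemma hasDerivAt_logistic (x : ℝ) :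
    HasDerivAt logistic (logistic x * (1 - logistic x)) x := by
  have h := ((Real.hasDerivAt_exp x).div ((Real.hasDerivAt_exp x).add_const 1)
    (exp_add_one_pos x).ne')
  refine h.congr_deriv ?_
  have hx := (exp_add_one_pos x).ne'
  simp only [logistic]
  field_simp

/-- MM majorization inequality used by the SLFPCA algorithm:
-log(π(v)) ≤ -log(π(v₀)) + (1/8)(v - v₀ - 4(1 - π(v₀)))². -/
theorem logistic_loss_mm_majorization (v v₀ : ℝ) :
    -Real.log (logistic v) ≤
      -Real.log (logistic v₀)
        + (1 / 8) * (v - v₀ - 4 * (1 - logistic v₀)) ^ 2 := by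
  set c : ℝ := 4 * (1 - logistic v₀) with hc
  -- the gap function
  set F : ℝ → ℝ := fun x =>
    (1 / 8) * (x - v₀ - c) ^ 2 - (Real.log (Real.exp x + 1) - x) with hF
  set F' : ℝ → ℝ := fun x => (1 / 4) * (x - v₀ - c) + 1 - logistic x with hF'
  have hder : ∀ x : ℝ, HasDerivAt F (F' x) x := by
    intro x
    have h1 : HasDerivAt (fun y : ℝ => (1 / 8) * (y - v₀ - c) ^ 2)
        ((1 / 4) * (x - v₀ - c)) x := by
      have := (((hasDerivAt_id x).sub_const v₀).sub_const c).pow 2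
      have := this.const_mul (1 / 8 : ℝ)
      refine this.congr_deriv ?_
      simp
      ring
    have h2 : HasDerivAt (fun y : ℝ => Real.log (Real.exp y + 1) - y)
        (logistic x - 1) x := (hasDerivAt_log_exp_add_one x).sub (hasDerivAt_id x)
    have := h1.sub h2
    refine this.congr_deriv ?_
    simp [hF']
    ring
  have hder2 : ∀ x : ℝ, HasDerivAt F' (1 / 4 - logistic x * (1 - logistic x)) x := by
    intro x
    have h1 : HasDerivAt (fun y : ℝ => (1 / 4) * (y - v₀ - c) + 1) (1 / 4 : ℝ) x := by
      have := (((hasDerivAt_id x).sub_const v₀).sub_const c).const_mul (1 / 4 : ℝ)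
      have := this.add_const 1
      simpa using this
    have := h1.sub (hasDerivAt_logistic x)
    exact this
  have hconv : ConvexOn ℝ univ F := by
    apply convexOn_of_hasDerivWithinAt2_nonneg (f' := F')
      (f'' := fun x => 1 / 4 - logistic x * (1 - logistic x)) convex_univ
    · exact fun x _ => (hder x).continuousAt.continuousWithinAt
    · intro x _
      exact (hder x).hasDerivWithinAt
    · intro x _
      exact (hder2 x).hasDerivWithinAt
    · intro x _
      have h0 := logistic_pos x
      have h1 := logistic_lt_one x
      nlinarith [sq_nonneg (logistic x - 1 / 2)]
  have hF'v₀ : F' v₀ = 0 := by simp [hF', hc]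
  -- F v ≥ F v₀
  have key : F v₀ ≤ F v := by
    rcases lt_trichotomy v v₀ with h | h | h
    · have := hconv.slope_le_of_hasDerivAt (mem_univ v) (mem_univ v₀) h (hder v₀)
      rw [hF'v₀, slope_def_field] at this
      have hd : v₀ - v > 0 := by linarith
      rw [div_nonpos_iff] at this
      rcases this with ⟨h1, h2⟩ | ⟨h1, h2⟩ <;> linarith
    · simp [h]
    · have := hconv.le_slope_of_hasDerivAt (mem_univ v₀) (mem_univ v) h (hder v₀)
      rw [hF'v₀, slope_def_field] at this
      have hd : v - v₀ > 0 := by linarith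
      rw [le_div_iff₀ hd] at this
      linarith
  have hFv₀ : F v₀ = (1 / 8) * c ^ 2 - (Real.log (Real.exp v₀ + 1) - v₀) := by
    simp [hF]
  have hc2 : 0 ≤ (1 / 8) * c ^ 2 := by positivity
  rw [neg_log_logistic, neg_log_logistic]
  have hFv : F v = (1 / 8) * (v - v₀ - c) ^ 2 - (Real.log (Real.exp v + 1) - v) := rfl
  linarith [key, hFv₀ ▸ key]
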